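/- Let α ∈ (0,1) and μ > 1/2, and write D := ∂_φ − ∂_β. There exist constants c, C > 0 depending only on α and μ such that for every C¹ function H : (0,∞) × 𝕋 → ℂ, c·(‖β^{2μ}DH‖_{C_β^α} + ‖β^{2μ−1}∂_φH‖_{C_β^α} + ‖⟨β⟩^α β^{2μ−1}H‖_{L^∞}) ≤ ‖β^{2μ}DH‖_{C_β^α} + ‖β^{2μ−1}∂_φH‖_{C_β^α} + ‖β^{2μ−1}H‖_{C_β^α} ≤ C·(‖β^{2μ}DH‖_{C_β^α} + ‖β^{2μ−1}∂_φH‖_{C_β^α} + ‖⟨β⟩^α β^{2μ−1}H‖_{L^∞}); in particular one side is finite if and only if the other is. -/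

import Mathlib

open MeasureTheory Filter Set
open scoped ENNReal

noncomputable def jap (β : ℝ) : ℝ := Real.sqrt (β ^ 2 + 1)

noncomputable def wSupNorm (w : ℝ → ℝ) (f : ℝ → ℝ → ℂ) : ℝ≥0∞ :=
  ⨆ (β : ℝ) (_ : 0 < β) (φ : ℝ), ENNReal.ofReal (w β * ‖f β φ‖)

noncomputable def holderSemi (α : ℝ) (f : ℝ → ℝ → ℂ) : ℝ≥0∞ :=
  ⨆ (φ : ℝ) (β₁ : ℝ) (β₂ : ℝ) (_ : 0 < β₂) (_ : β₂ < β₁) (_ : β₁ < 2 * β₂)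
      (_ : β₁ - β₂ < 1),
    ENNReal.ofReal ((β₁ + β₂) ^ α * ‖f β₁ φ - f β₂ φ‖ / (β₁ - β₂) ^ α)

noncomputable def CbNorm (α : ℝ) (f : ℝ → ℝ → ℂ) : ℝ≥0∞ :=
  wSupNorm (fun β => jap β ^ α) f + holderSemi α f

def Periodic2 (f : ℝ → ℝ → ℂ) : Prop := ∀ β φ, f β (φ + 2 * Real.pi) = f β φ

def ContOn2 (f : ℝ → ℝ → ℂ) : Prop :=
  ContinuousOn (fun p : ℝ × ℝ => f p.1 p.2) (Set.Ioi 0 ×ˢ Set.univ)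

noncomputable def X0Norm (α μ : ℝ) (H Hβ Hφ : ℝ → ℝ → ℂ) : ℝ≥0∞ :=
  CbNorm α (fun β φ => (β ^ (2*μ) : ℝ) • (Hφ β φ - Hβ β φ)) +
    CbNorm α (fun β φ => (β ^ (2*μ - 1) : ℝ) • Hφ β φ) +
    CbNorm α (fun β φ => (β ^ (2*μ - 1) : ℝ) • H β φ)

noncomputable def X0NormAux (α μ : ℝ) (H Hβ Hφ : ℝ → ℝ → ℂ) : ℝ≥0∞ :=
  CbNorm α (fun β φ => (β ^ (2*μ) : ℝ) • (Hφ β φ - Hβ β φ)) +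
    CbNorm α (fun β φ => (β ^ (2*μ - 1) : ℝ) • Hφ β φ) +
    wSupNorm (fun β => jap β ^ α * β ^ (2*μ - 1)) H

lemma jap_ge_one (β : ℝ) : 1 ≤ jap β := by
  have : Real.sqrt 1 ≤ Real.sqrt (β^2+1) := Real.sqrt_le_sqrt (by nlinarith [sq_nonneg β])
  simpa [jap] using this

lemma jap_pos (β : ℝ) : 0 < jap β := lt_of_lt_of_le one_pos (jap_ge_one β)

lemma jap_mono {a b : ℝ} (ha : 0 ≤ a) (hab : a ≤ b) : jap a ≤ jap b :=
  Real.sqrt_le_sqrt (by nlinarith)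

lemma le_jap {β : ℝ} (hb : 0 ≤ β) : β ≤ jap β := by
  have : Real.sqrt (β^2) ≤ Real.sqrt (β^2+1) := Real.sqrt_le_sqrt (by nlinarith)
  rwa [Real.sqrt_sq hb] at this

lemma wsup_bound {w : ℝ → ℝ} {f : ℝ → ℝ → ℂ} {S : ℝ≥0∞} (h : wSupNorm w f ≤ S)
    (hS : S ≠ ⊤) {β : ℝ} (hβ : 0 < β) (φ : ℝ) : w β * ‖f β φ‖ ≤ S.toReal := by
  rw [← ENNReal.ofReal_le_iff_le_toReal hS]
  refine le_trans ?_ h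
  exact le_iSup_of_le β (le_iSup_of_le hβ (le_iSup_of_le φ le_rfl))

lemma wsup_smul_eq (a p : ℝ) (H : ℝ → ℝ → ℂ) :
    wSupNorm (fun β => jap β ^ a * β ^ p) H
      = wSupNorm (fun β => jap β ^ a) (fun β φ => (β ^ p : ℝ) • H β φ) := by
  unfold wSupNorm
  refine iSup_congr fun β => iSup_congr fun hβ => iSup_congr fun φ => ?_
  congr 1
  rw [norm_smul, Real.norm_eq_abs, abs_of_pos (Real.rpow_pos_of_pos hβ p)]
  ring

set_option maxHeartbeats 2000000 in
theorem statement5 (α μ : ℝ) (hα : α ∈ Set.Ioo (0:ℝ) 1) (hμ : 1/2 < μ) :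
    ∃ c > (0:ℝ), ∃ C > (0:ℝ), ∀ H Hβ Hφ : ℝ → ℝ → ℂ,
      ContOn2 H → ContOn2 Hβ → ContOn2 Hφ → Periodic2 H →
      (∀ β φ : ℝ, 0 < β → HasDerivAt (fun b => H b φ) (Hβ β φ) β) →
      (∀ β φ : ℝ, 0 < β → HasDerivAt (fun p => H β p) (Hφ β φ) φ) →
      (ENNReal.ofReal c * X0NormAux α μ H Hβ Hφ ≤ X0Norm α μ H Hβ Hφ ∧
        X0Norm α μ H Hβ Hφ ≤ ENNReal.ofReal C * X0NormAux α μ H Hβ Hφ) := by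
  obtain ⟨hα0, hα1⟩ := hα
  have h3pos : (0:ℝ) < 3 ^ α := Real.rpow_pos_of_pos (by norm_num) α
  set K : ℝ := 3 ^ α * (2*μ + 2) with hKdef
  have hKpos : 0 < K := mul_pos h3pos (by linarith)
  refine ⟨1, one_pos, 1 + K, by linarith, fun H Hβ Hφ _ _ _ _ hdβ _ => ?_⟩
  set M := CbNorm α (fun β φ => (β ^ (2*μ) : ℝ) • (Hφ β φ - Hβ β φ)) with hMdef
  set B := CbNorm α (fun β φ => (β ^ (2*μ - 1) : ℝ) • Hφ β φ) with hBdef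
  set A := wSupNorm (fun β => jap β ^ α * β ^ (2*μ - 1)) H with hAdef
  have haux : X0NormAux α μ H Hβ Hφ = M + B + A := rfl
  have hwse : wSupNorm (fun β => jap β ^ α) (fun β φ => (β ^ (2*μ - 1) : ℝ) • H β φ) = A :=
    (wsup_smul_eq α (2*μ-1) H).symm
  set hS := holderSemi α (fun β φ => (β ^ (2*μ - 1) : ℝ) • H β φ) with hSdef
  have hX0 : X0Norm α μ H Hβ Hφ = M + B + (A + hS) := by
    rw [X0Norm, ← hMdef, ← hBdef, CbNorm, hwse, hSdef]
  constructor
  · rw [haux, hX0, ENNReal.ofReal_one, one_mul]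
    exact add_le_add le_rfl le_self_add
  by_cases hfin : M + B + A = ⊤
  · rw [haux, hfin, ENNReal.mul_top]
    · exact le_top
    · simpa using (ENNReal.ofReal_pos.mpr (by linarith : (0:ℝ) < 1 + K)).ne'
  -- finite case
  have hMt : M ≠ ⊤ := fun h => hfin (by simp [h])
  have hBt : B ≠ ⊤ := fun h => hfin (by simp [h])
  have hAt : A ≠ ⊤ := fun h => hfin (by simp [h])
  set A' := A.toReal with hA'
  set B' := B.toReal with hB'
  set M' := M.toReal with hM'
  have hA'0 : 0 ≤ A' := ENNReal.toReal_nonneg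
  have hB'0 : 0 ≤ B' := ENNReal.toReal_nonneg
  have hM'0 : 0 ≤ M' := ENNReal.toReal_nonneg
  have hμ1 : (0:ℝ) < 2*μ - 1 := by linarith
  -- pointwise bounds
  have hbH : ∀ {b : ℝ}, 0 < b → ∀ φ', jap b ^ α * b ^ (2*μ-1) * ‖H b φ'‖ ≤ A' :=
    fun {b} hb φ' => wsup_bound le_rfl hAt hb φ'
  have hbB : ∀ {b : ℝ}, 0 < b → ∀ φ', jap b ^ α * (b ^ (2*μ-1) * ‖Hφ b φ'‖) ≤ B' := by
    intro b hb φ'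
    have := wsup_bound (le_self_add :
      wSupNorm (fun β => jap β ^ α) (fun β φ => (β ^ (2*μ - 1) : ℝ) • Hφ β φ) ≤ B) hBt hb φ'
    rwa [norm_smul, Real.norm_eq_abs, abs_of_pos (Real.rpow_pos_of_pos hb _)] at this
  have hbM : ∀ {b : ℝ}, 0 < b → ∀ φ',
      jap b ^ α * (b ^ (2*μ) * ‖Hφ b φ' - Hβ b φ'‖) ≤ M' := by
    intro b hb φ'
    have := wsup_bound (le_self_add :
      wSupNorm (fun β => jap β ^ α) (fun β φ => (β ^ (2*μ) : ℝ) • (Hφ β φ - Hβ β φ)) ≤ M)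
      hMt hb φ'
    rwa [norm_smul, Real.norm_eq_abs, abs_of_pos (Real.rpow_pos_of_pos hb _)] at this
  -- Hölder seminorm bound
  have hholder : hS ≤ ENNReal.ofReal (K * (A' + B' + M')) := by
    rw [hSdef, holderSemi]
    refine iSup_le fun φ' => iSup_le fun β₁ => iSup_le fun β₂ => iSup_le fun h1 =>
      iSup_le fun h2 => iSup_le fun h3 => iSup_le fun h4 => ENNReal.ofReal_le_ofReal ?_
    set d := β₁ - β₂ with hd
    have hd0 : 0 < d := sub_pos.mpr h2
    have hb1 : 0 < β₁ := h1.trans h2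
    set N : ℝ := (2*μ-1)*A' + M' + 2*β₂*B' with hNdef
    have hN0 : 0 ≤ N := by positivity
    set den : ℝ := jap β₂ ^ α * β₂ with hden
    have hden0 : 0 < den := mul_pos (Real.rpow_pos_of_pos (jap_pos β₂) α) h1
    set L : ℝ := N / den with hL
    have hL0 : 0 ≤ L := div_nonneg hN0 hden0.le
    -- derivative bound on Icc β₂ β₁
    have hderivb : ∀ b ∈ Set.Icc β₂ β₁,
        ‖(b ^ (2*μ-1) : ℝ) • Hβ b φ' + ((2*μ-1) * b ^ (2*μ-1-1) : ℝ) • H b φ'‖ ≤ L := by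
      intro b hb
      have hb0 : 0 < b := lt_of_lt_of_le h1 hb.1
      have hb2 : b ≤ 2*β₂ := hb.2.trans h3.le
      have hpb : 0 < b ^ (2*μ-1) := Real.rpow_pos_of_pos hb0 _
      have hpb2 : 0 < b ^ (2*μ-1-1) := Real.rpow_pos_of_pos hb0 _
      have hk : 0 < jap b ^ α := Real.rpow_pos_of_pos (jap_pos b) α
      have e1 : b ^ (2*μ-1-1) * b = b ^ (2*μ-1) := by
        rw [← Real.rpow_add_one hb0.ne' (2*μ-1-1)]; ring_nf
      have e2 : b ^ (2*μ-1) * b = b ^ (2*μ) := by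
        rw [← Real.rpow_add_one hb0.ne' (2*μ-1)]; ring_nf
      have n1 : ‖Hβ b φ'‖ ≤ ‖Hφ b φ'‖ + ‖Hφ b φ' - Hβ b φ'‖ := by
        have n1' := norm_sub_le (Hφ b φ') (Hφ b φ' - Hβ b φ')
        rwa [sub_sub_cancel] at n1'
      have t1 := hbB hb0 φ'
      have t2 := hbM hb0 φ'
      have t3 := hbH hb0 φ'
      have hnrm : ‖(b ^ (2*μ-1) : ℝ) • Hβ b φ' + ((2*μ-1) * b ^ (2*μ-1-1) : ℝ) • H b φ'‖
          ≤ b ^ (2*μ-1) * ‖Hβ b φ'‖ + (2*μ-1) * b ^ (2*μ-1-1) * ‖H b φ'‖ := by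
        refine (norm_add_le _ _).trans ?_
        rw [norm_smul, norm_smul, Real.norm_eq_abs, Real.norm_eq_abs,
          abs_of_pos hpb, abs_of_pos (mul_pos hμ1 hpb2)]
      have hmain : (b ^ (2*μ-1) * ‖Hβ b φ'‖ + (2*μ-1) * b ^ (2*μ-1-1) * ‖H b φ'‖)
          * (jap b ^ α * b) ≤ N := by
        have r1 : jap b ^ α * b ^ (2*μ) * ‖Hφ b φ'‖ ≤ B' * (2*β₂) := by
          have e3 : jap b ^ α * b ^ (2*μ) * ‖Hφ b φ'‖
              = (jap b ^ α * (b ^ (2*μ-1) * ‖Hφ b φ'‖)) * b := by rw [← e2]; ring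
          rw [e3]
          calc (jap b ^ α * (b ^ (2*μ-1) * ‖Hφ b φ'‖)) * b ≤ B' * b :=
                mul_le_mul_of_nonneg_right t1 hb0.le
            _ ≤ B' * (2*β₂) := mul_le_mul_of_nonneg_left hb2 hB'0
        have r2 : jap b ^ α * b ^ (2*μ) * ‖Hφ b φ' - Hβ b φ'‖ ≤ M' := by
          rw [mul_assoc]; exact t2
        have r3 : (2*μ-1) * (jap b ^ α * b ^ (2*μ-1) * ‖H b φ'‖) ≤ (2*μ-1) * A' :=
          mul_le_mul_of_nonneg_left t3 hμ1.le
        have hβnorm : jap b ^ α * b ^ (2*μ) * ‖Hβ b φ'‖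
            ≤ jap b ^ α * b ^ (2*μ) * ‖Hφ b φ'‖
              + jap b ^ α * b ^ (2*μ) * ‖Hφ b φ' - Hβ b φ'‖ := by
          rw [← mul_add]; exact mul_le_mul_of_nonneg_left n1 (by positivity)
        calc (b ^ (2*μ-1) * ‖Hβ b φ'‖ + (2*μ-1) * b ^ (2*μ-1-1) * ‖H b φ'‖)
              * (jap b ^ α * b)
            = jap b ^ α * b ^ (2*μ) * ‖Hβ b φ'‖
              + (2*μ-1) * (jap b ^ α * b ^ (2*μ-1) * ‖H b φ'‖) := by
              rw [← e2, ← e1]; ring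
          _ ≤ N := by rw [hNdef]; linarith
      have h1' : ‖(b ^ (2*μ-1) : ℝ) • Hβ b φ' + ((2*μ-1) * b ^ (2*μ-1-1) : ℝ) • H b φ'‖
          * (jap b ^ α * b) ≤ N :=
        le_trans (mul_le_mul_of_nonneg_right hnrm (by positivity)) hmain
      have h2' : ‖(b ^ (2*μ-1) : ℝ) • Hβ b φ' + ((2*μ-1) * b ^ (2*μ-1-1) : ℝ) • H b φ'‖
          ≤ N / (jap b ^ α * b) := (le_div_iff₀ (by positivity)).mpr h1'
      refine h2'.trans ?_
      rw [hL]
      refine div_le_div_of_nonneg_left hN0 hden0 ?_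
      exact mul_le_mul (Real.rpow_le_rpow (jap_pos β₂).le (jap_mono h1.le hb.1) hα0.le)
        hb.1 h1.le (by positivity)
    -- mean value theorem
    have hmvt : ‖(β₁ ^ (2*μ-1) : ℝ) • H β₁ φ' - (β₂ ^ (2*μ-1) : ℝ) • H β₂ φ'‖ ≤ L * d := by
      have := Convex.norm_image_sub_le_of_norm_hasDerivWithin_le
        (f := fun b => (b ^ (2*μ-1) : ℝ) • H b φ')
        (f' := fun b => (b ^ (2*μ-1) : ℝ) • Hβ b φ' + ((2*μ-1) * b ^ (2*μ-1-1) : ℝ) • H b φ')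
        (s := Set.Icc β₂ β₁) (x := β₂) (y := β₁) (C := L)
        (fun b hb => by
          have hb0 : 0 < b := lt_of_lt_of_le h1 hb.1
          exact ((Real.hasDerivAt_rpow_const (Or.inl hb0.ne')).smul
            (hdβ b φ' hb0)).hasDerivWithinAt)
        hderivb (convex_Icc _ _) ⟨le_rfl, h2.le⟩ ⟨h2.le, le_rfl⟩
      rwa [Real.norm_eq_abs, abs_of_pos hd0] at this
    -- final scalar estimate
    have hq1 : β₂ ^ α * d ^ (1-α) ≤ β₂ := by
      have hdβ₂ : d ≤ β₂ := by rw [hd]; linarith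
      have : d ^ (1-α) ≤ β₂ ^ (1-α) := Real.rpow_le_rpow hd0.le hdβ₂ (by linarith)
      calc β₂ ^ α * d ^ (1-α) ≤ β₂ ^ α * β₂ ^ (1-α) :=
            mul_le_mul_of_nonneg_left this (by positivity)
        _ = β₂ := by rw [← Real.rpow_add h1]; norm_num
    have hj1 : 1 ≤ jap β₂ ^ α := Real.one_le_rpow (jap_ge_one β₂) hα0.le
    have hq2 : β₂ ^ α * d ^ (1-α) ≤ jap β₂ ^ α := by
      rcases le_total β₂ 1 with hc | hc
      · exact le_trans hq1 (le_trans hc hj1)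
      · have hd1 : d ^ (1-α) ≤ 1 := Real.rpow_le_one hd0.le h4.le (by linarith)
        calc β₂ ^ α * d ^ (1-α) ≤ β₂ ^ α * 1 :=
              mul_le_mul_of_nonneg_left hd1 (by positivity)
          _ = β₂ ^ α := mul_one _
          _ ≤ jap β₂ ^ α := Real.rpow_le_rpow h1.le (le_jap h1.le) hα0.le
    set X : ℝ := β₂ ^ α * d ^ (1-α) with hX
    have hX0' : 0 ≤ X := by positivity
    have hstep : N * X ≤ (2*μ+2) * (A' + B' + M') * den := by
      have s1 : ((2*μ-1)*A' + M') * X ≤ ((2*μ-1)*A' + M') * β₂ :=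
        mul_le_mul_of_nonneg_left hq1 (by positivity)
      have s2 : (2*β₂*B') * X ≤ (2*β₂*B') * (jap β₂ ^ α) :=
        mul_le_mul_of_nonneg_left hq2 (by positivity)
      have s3 : ((2*μ-1)*A' + M') * β₂ ≤ ((2*μ+2)*A' + (2*μ+2)*M') * β₂ := by
        have : (2*μ-1)*A' + M' ≤ (2*μ+2)*A' + (2*μ+2)*M' := by nlinarith
        exact mul_le_mul_of_nonneg_right this h1.le
      have s4 : ((2*μ+2)*A' + (2*μ+2)*M') * β₂ ≤ ((2*μ+2)*A' + (2*μ+2)*M') * β₂ * (jap β₂ ^ α) :=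
        le_mul_of_one_le_right
          (mul_nonneg (by nlinarith : (0:ℝ) ≤ (2*μ+2)*A' + (2*μ+2)*M') h1.le) hj1
      have s5 : (2*β₂*B') * (jap β₂ ^ α) ≤ (2*μ+2) * B' * β₂ * (jap β₂ ^ α) := by
        have : 2*β₂*B' ≤ (2*μ+2) * B' * β₂ := by
          nlinarith [mul_nonneg (mul_nonneg (by linarith : (0:ℝ) ≤ 2*μ) h1.le) hB'0]
        exact mul_le_mul_of_nonneg_right this (by positivity)
      have expand : N * X = ((2*μ-1)*A' + M') * X + (2*β₂*B') * X := by rw [hNdef]; ring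
      rw [expand]
      have : ((2*μ+2)*A' + (2*μ+2)*M') * β₂ * (jap β₂ ^ α) + (2*μ+2) * B' * β₂ * (jap β₂ ^ α)
          = (2*μ+2) * (A' + B' + M') * den := by rw [hden]; ring
      linarith [s1.trans (s3.trans s4), s2.trans s5]
    -- assemble
    have hsum : (β₁ + β₂) ^ α ≤ 3 ^ α * β₂ ^ α := by
      rw [← Real.mul_rpow (by norm_num) h1.le]
      exact Real.rpow_le_rpow (by linarith) (by linarith) hα0.le
    have hQ1 : (β₁ + β₂) ^ α * ‖(β₁ ^ (2*μ-1) : ℝ) • H β₁ φ' - (β₂ ^ (2*μ-1) : ℝ) • H β₂ φ'‖ / d ^ α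
        ≤ (β₁ + β₂) ^ α * (L * d) / d ^ α := by
      have hda : 0 < d ^ α := Real.rpow_pos_of_pos hd0 α
      exact div_le_div_of_nonneg_right (mul_le_mul_of_nonneg_left hmvt (by positivity)) hda.le
    have hQ2 : (β₁ + β₂) ^ α * (L * d) / d ^ α = (β₁ + β₂) ^ α * L * d ^ (1-α) := by
      rw [Real.rpow_sub hd0, Real.rpow_one]
      field_simp
    have hQ3 : (β₁ + β₂) ^ α * L * d ^ (1-α) ≤ 3 ^ α * β₂ ^ α * L * d ^ (1-α) := by
      have h0 : (0:ℝ) ≤ L * d ^ (1-α) := by positivity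
      calc (β₁ + β₂) ^ α * L * d ^ (1-α) = (β₁ + β₂) ^ α * (L * d ^ (1-α)) := by ring
        _ ≤ 3 ^ α * β₂ ^ α * (L * d ^ (1-α)) := mul_le_mul_of_nonneg_right hsum h0
        _ = 3 ^ α * β₂ ^ α * L * d ^ (1-α) := by ring
    have hQ4 : 3 ^ α * β₂ ^ α * L * d ^ (1-α) = 3 ^ α * ((N * X) / den) := by
      rw [hL, hX]; ring
    have hQ5 : (N * X) / den ≤ (2*μ+2) * (A' + B' + M') :=
      (div_le_iff₀ hden0).mpr hstep
    calc (β₁ + β₂) ^ α * ‖(β₁ ^ (2*μ-1) : ℝ) • H β₁ φ' - (β₂ ^ (2*μ-1) : ℝ) • H β₂ φ'‖ / d ^ α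
        ≤ (β₁ + β₂) ^ α * (L * d) / d ^ α := hQ1
      _ = (β₁ + β₂) ^ α * L * d ^ (1-α) := hQ2
      _ ≤ 3 ^ α * β₂ ^ α * L * d ^ (1-α) := hQ3
      _ = 3 ^ α * ((N * X) / den) := hQ4
      _ ≤ 3 ^ α * ((2*μ+2) * (A' + B' + M')) := mul_le_mul_of_nonneg_left hQ5 h3pos.le
      _ = K * (A' + B' + M') := by rw [hKdef]; ring
  -- conclude
  have hsplit : ENNReal.ofReal (K * (A' + B' + M')) ≤ ENNReal.ofReal K * (M + B + A) := by
    rw [ENNReal.ofReal_mul hKpos.le]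
    refine mul_le_mul_of_nonneg_left ?_ (by positivity)
    calc ENNReal.ofReal (A' + B' + M')
        ≤ ENNReal.ofReal (A' + B') + ENNReal.ofReal M' := ENNReal.ofReal_add_le
      _ ≤ ENNReal.ofReal A' + ENNReal.ofReal B' + ENNReal.ofReal M' :=
          add_le_add_left ENNReal.ofReal_add_le _
      _ = A + B + M := by
          rw [hA', hB', hM', ENNReal.ofReal_toReal hAt, ENNReal.ofReal_toReal hBt,
            ENNReal.ofReal_toReal hMt]
      _ = M + B + A := by ring
  rw [hX0, haux]
  calc M + B + (A + hS) ≤ M + B + (A + ENNReal.ofReal K * (M + B + A)) :=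
        add_le_add le_rfl (add_le_add le_rfl (hholder.trans hsplit))
    _ = (M + B + A) + ENNReal.ofReal K * (M + B + A) := by ring
    _ = (1 + ENNReal.ofReal K) * (M + B + A) := by ring
    _ = ENNReal.ofReal (1 + K) * (M + B + A) := by
        rw [ENNReal.ofReal_add (by norm_num) hKpos.le, ENNReal.ofReal_one]
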